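/- Let u = α_1 x_1 + ⋯ + α_n x_n be a linear combination of the generators of the free metabelian nilpotent of class c Lie algebra L_{n,c} (with α_1, …, α_n ∈ K), and let v = x_1 + ⋯ + x_n. If the bracket [u,v] is a symmetric element of L_{n,c}, then u = α v for some α ∈ K (namely α = α_1 = ⋯ = α_n). -/

import Mathlib

noncomputable section

open LieAlgebra LieModule

variable (K : Type*) [Field K] [CharZero K] (n c : ℕ)

/-- The free Lie algebra `L_n` of rank `n` over `K`. -/
abbrev L := FreeLieAlgebra K (Fin n)

/-- The generators `x_1, …, x_n` of `L_n`. -/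
def X (i : Fin n) : L K n := FreeLieAlgebra.of K i

/-- The automorphic action of a permutation `π ∈ S_n` on `L_n`, permuting the generators. -/
def permMap (π : Equiv.Perm (Fin n)) : L K n →ₗ⁅K⁆ L K n :=
  FreeLieAlgebra.lift K (fun i => FreeLieAlgebra.of K (π i))

/-- The ideal `L_n'' + γ^{c+1}(L_n)` (note `γ^{k+1}(L_n) = lowerCentralSeries K L_n L_n k`). -/
abbrev nilIdeal : LieIdeal K (L K n) :=
  derivedSeries K (L K n) 2 ⊔ lowerCentralSeries K (L K n) (L K n) c

/-- The free metabelian nilpotent of class `c` Lie algebra `L_{n,c} = L_n/(L_n'' + γ^{c+1}(L_n))`. -/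
abbrev Q := L K n ⧸ (nilIdeal K n c)

/-- The canonical projection `L_n → L_{n,c}`. -/
def Qmk : L K n → Q K n c := LieSubmodule.Quotient.mk

/-- The images `x_1, …, x_n` of the generators in `L_{n,c}`. -/
def Qx (i : Fin n) : Q K n c := Qmk K n c (X K n i)

/-- An element of `L_{n,c}` is symmetric if it is fixed by the induced action of every `π ∈ S_n`.
(The defining ideal is invariant under the `S_n`-action, so the action descends.) -/
def QIsSymm (p : Q K n c) : Prop :=
  ∀ π : Equiv.Perm (Fin n), ∀ a : L K n, Qmk K n c a = p → Qmk K n c (permMap K n π a) = p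

/-- The (right) adjoint operator `ad u : v ↦ [v, u]` on `L_{n,c}`. -/
def adr (u : Q K n c) : Module.End K (Q K n c) := -(LieAlgebra.ad K (Q K n c) u)

/-- The truncated exponential `ε_u = ∑_{k=0}^{c-1} (1/k!) (ad u)^k` on `L_{n,c}`. -/
def eps (u : Q K n c) : Module.End K (Q K n c) :=
  ∑ k ∈ Finset.range c, ((Nat.factorial k : K))⁻¹ • (adr K n c u) ^ k

set_option linter.unusedSectionVars false

attribute [local instance 100] LieRing.ofAssociativeRing

/-! ### Auxiliary: the free 2-step nilpotent Lie algebra on `n` generators -/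
def HH : Type _ := (Fin n → K) × (Fin n → Fin n → K)
namespace HH
open LieModule
variable {K n}
instance : AddCommGroup (HH K n) := inferInstanceAs (AddCommGroup (_ × _))
instance : Module K (HH K n) := inferInstanceAs (Module K (_ × _))
def fst (x : HH K n) : Fin n → K := Prod.fst x
def snd (x : HH K n) : Fin n → Fin n → K := Prod.snd x
omit [Field K] in
lemma ext {x y : HH K n} (h1 : x.fst = y.fst) (h2 : x.snd = y.snd) : x = y := Prod.ext h1 h2
instance : LieRing (HH K n) where
  bracket x y := ((0 : Fin n → K), fun i j => x.fst i * y.fst j - x.fst j * y.fst i)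
  add_lie x y z := by
    refine ext ?_ ?_
    · show (0 : Fin n → K) = 0 + 0; simp
    · funext i j
      show (x.fst i + y.fst i) * z.fst j - (x.fst j + y.fst j) * z.fst i
        = (x.fst i * z.fst j - x.fst j * z.fst i) + (y.fst i * z.fst j - y.fst j * z.fst i)
      ring
  lie_add x y z := by
    refine ext ?_ ?_
    · show (0 : Fin n → K) = 0 + 0; simp
    · funext i j
      show x.fst i * (y.fst j + z.fst j) - x.fst j * (y.fst i + z.fst i)
        = (x.fst i * y.fst j - x.fst j * y.fst i) + (x.fst i * z.fst j - x.fst j * z.fst i)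
      ring
  lie_self x := by
    refine ext rfl ?_; funext i j; show x.fst i * x.fst j - x.fst j * x.fst i = 0; ring
  leibniz_lie x y z := by
    refine ext ?_ ?_
    · show (0 : Fin n → K) = 0 + 0; simp
    · funext i j
      show x.fst i * (0:K) - x.fst j * (0:K)
        = ((0:K) * z.fst j - (0:K) * z.fst i) + (y.fst i * (0:K) - y.fst j * (0:K))
      ring
@[simp] lemma fst_lie (x y : HH K n) : (⁅x, y⁆ : HH K n).fst = 0 := rfl
@[simp] lemma snd_lie (x y : HH K n) :
    (⁅x, y⁆ : HH K n).snd = fun i j => x.fst i * y.fst j - x.fst j * y.fst i := rfl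
instance : LieAlgebra K (HH K n) where
  lie_smul a x y := by
    refine ext ?_ ?_
    · show (0 : Fin n → K) = a • 0; simp
    · funext i j
      show x.fst i * (a * y.fst j) - x.fst j * (a * y.fst i)
        = a * (x.fst i * y.fst j - x.fst j * y.fst i)
      ring

lemma lie_eq_zero_of_fst_eq_zero (x m : HH K n) (h : m.fst = 0) : ⁅x, m⁆ = (0 : HH K n) := by
  refine ext rfl ?_
  funext i j
  show x.fst i * m.fst j - x.fst j * m.fst i = (0 : (Fin n → Fin n → K)) i j
  simp [h]

def fstHom : HH K n →ₗ⁅K⁆ (Fin n → K) where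
  toFun := fst
  map_add' x y := rfl
  map_smul' a x := rfl
  map_lie' {x y} := by
    show (0 : Fin n → K) = ⁅fst x, fst y⁆
    rw [Ring.lie_def, mul_comm, sub_self]

lemma lcs_one_le_ker :
    LieModule.lowerCentralSeries K (HH K n) (HH K n) 1 ≤ (fstHom (K := K) (n := n)).ker := by
  rw [LieModule.lowerCentralSeries_succ, LieModule.lowerCentralSeries_zero,
    LieSubmodule.lie_le_iff]
  intro x _ m _
  rw [LieHom.mem_ker]
  show (⁅x, m⁆ : HH K n).fst = 0
  rfl

lemma lcs_two : LieModule.lowerCentralSeries K (HH K n) (HH K n) 2 = ⊥ := by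
  rw [eq_bot_iff, LieModule.lowerCentralSeries_succ, LieSubmodule.lie_le_iff]
  intro x _ m hm
  have h : m.fst = 0 := LieHom.mem_ker.mp (lcs_one_le_ker hm)
  simp [lie_eq_zero_of_fst_eq_zero x m h]

lemma lcs_le (c : ℕ) (hc : 2 ≤ c) : LieModule.lowerCentralSeries K (HH K n) (HH K n) c = ⊥ := by
  rw [eq_bot_iff, ← lcs_two (K := K) (n := n)]
  exact antitone_lowerCentralSeries K _ _ hc

lemma ds_two : LieAlgebra.derivedSeries K (HH K n) 2 = ⊥ := by
  rw [eq_bot_iff, ← lcs_two (K := K) (n := n)]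
  exact LieModule.derivedSeries_le_lowerCentralSeries K _ 2

end HH

lemma lieHom_map_sum {R L₁ L₂ ι : Type*} [CommRing R] [LieRing L₁] [LieAlgebra R L₁]
    [LieRing L₂] [LieAlgebra R L₂] (f : L₁ →ₗ⁅R⁆ L₂) (s : Finset ι) (g : ι → L₁) :
    f (∑ i ∈ s, g i) = ∑ i ∈ s, f (g i) := by
  rw [← LieHom.coe_toLinearMap]; exact map_sum _ _ _

lemma lieModuleHom_map_sum {R L M N ι : Type*} [CommRing R] [LieRing L] [LieAlgebra R L]
    [AddCommGroup M] [Module R M] [LieRingModule L M] [LieModule R L M]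
    [AddCommGroup N] [Module R N] [LieRingModule L N] [LieModule R L N]
    (f : M →ₗ⁅R,L⁆ N) (s : Finset ι) (g : ι → M) :
    f (∑ i ∈ s, g i) = ∑ i ∈ s, f (g i) := by
  rw [← LieModuleHom.coe_toLinearMap]; exact map_sum _ _ _

/-- The evaluation homomorphism to the free 2-step nilpotent algebra. -/
def phi : L K n →ₗ⁅K⁆ HH K n :=
  FreeLieAlgebra.lift K (fun i => (show HH K n from ((Pi.single i 1 : Fin n → K), 0)))

lemma nilIdeal_le_ker (hc : 2 ≤ c) : nilIdeal K n c ≤ (phi K n).ker := by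
  refine sup_le ?_ ?_
  · rw [← LieIdeal.map_eq_bot_iff, eq_bot_iff]
    exact le_trans (LieIdeal.derivedSeries_map_le 2) (HH.ds_two (K := K) (n := n)).le
  · rw [← LieIdeal.map_eq_bot_iff, eq_bot_iff]
    exact le_trans (LieIdeal.map_lowerCentralSeries_le c) (HH.lcs_le c hc).le

/-- The composite `L_n → H → K^n` (abelianization coordinates). -/
def F : L K n →ₗ⁅K⁆ (Fin n → K) := HH.fstHom.comp (phi K n)

lemma F_X (i : Fin n) : F K n (X K n i) = Pi.single i 1 := by
  show HH.fstHom (phi K n (FreeLieAlgebra.of K i)) = _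
  rw [phi, FreeLieAlgebra.lift_of_apply]
  rfl

lemma sum_smul_single (β : Fin n → K) :
    (∑ m : Fin n, β m • (Pi.single m (1:K) : Fin n → K)) = β := by
  have : ∀ m : Fin n, β m • (Pi.single m (1:K) : Fin n → K) = Pi.single m (β m) := by
    intro m; rw [← Pi.single_smul, smul_eq_mul, mul_one]
  simp_rw [this]
  exact Finset.univ_sum_single β

lemma permMap_X (π : Equiv.Perm (Fin n)) (i : Fin n) :
    permMap K n π (X K n i) = X K n (π i) := by
  rw [permMap, X, FreeLieAlgebra.lift_of_apply]; rfl


/-- Let `u = α_1 x_1 + ⋯ + α_n x_n` be a linear combination of the generators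
of `L_{n,c}` and `v = x_1 + ⋯ + x_n`. If `[u, v]` is a symmetric element of `L_{n,c}`, then
`u = α v` for some `α ∈ K`. -/
theorem linear_bracket_symm_imp_scalar {K : Type*} [Field K] [CharZero K] {n c : ℕ}
    (hn : 2 ≤ n) (hc : 2 ≤ c) (α : Fin n → K)
    (h : QIsSymm K n c ⁅∑ i : Fin n, α i • Qx K n c i, ∑ i : Fin n, Qx K n c i⁆) :
    ∃ a : K, (∑ i : Fin n, α i • Qx K n c i) = a • ∑ i : Fin n, Qx K n c i := by
  classical
  set uL : L K n := ∑ i : Fin n, α i • X K n i with huL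
  set vL : L K n := ∑ i : Fin n, X K n i with hvL
  have hQ : ∀ x : L K n, Qmk K n c x = LieSubmodule.Quotient.mk' (nilIdeal K n c) x :=
    fun _ => rfl
  have hQu : Qmk K n c uL = ∑ i : Fin n, α i • Qx K n c i := by
    rw [hQ, huL, lieModuleHom_map_sum]
    simp_rw [map_smul]
    rfl
  have hQv : Qmk K n c vL = ∑ i : Fin n, Qx K n c i := by
    rw [hQ, hvL, lieModuleHom_map_sum]
    rfl
  have hQw : Qmk K n c ⁅uL, vL⁆ = ⁅∑ i : Fin n, α i • Qx K n c i, ∑ i : Fin n, Qx K n c i⁆ := by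
    rw [← hQu, ← hQv]; exact LieSubmodule.Quotient.mk_bracket (I := nilIdeal K n c) uL vL
  -- symmetry gives membership in the ideal
  have hker : ∀ x : L K n, x ∈ nilIdeal K n c → phi K n x = 0 := fun x hx =>
    LieHom.mem_ker.mp (nilIdeal_le_ker K n c hc hx)
  have key : ∀ π : Equiv.Perm (Fin n), phi K n (permMap K n π ⁅uL, vL⁆) = phi K n ⁅uL, vL⁆ := by
    intro π
    have h1 := h π ⁅uL, vL⁆ hQw
    rw [← hQw] at h1
    have h2 : permMap K n π ⁅uL, vL⁆ - ⁅uL, vL⁆ ∈ nilIdeal K n c := by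
      rw [← LieSubmodule.Quotient.mk_eq_zero, map_sub, ← hQ, ← hQ, h1, sub_self]
    have := hker _ h2
    rw [map_sub, sub_eq_zero] at this
    exact this
  -- compute F-values
  have hFu : F K n uL = α := by
    rw [huL, lieHom_map_sum]; simp_rw [map_smul, F_X]; exact sum_smul_single K n α
  have hFv : F K n vL = fun _ => (1:K) := by
    have := sum_smul_single K n (fun _ => (1:K))
    simp only [one_smul] at this
    rw [hvL, lieHom_map_sum]; simp_rw [F_X]; exact this
  have hall : ∀ i j : Fin n, α i = α j := by
    intro i j
    set π : Equiv.Perm (Fin n) := Equiv.swap i j with hπ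
    have hpu : permMap K n π uL = ∑ k : Fin n, α k • X K n (π k) := by
      rw [huL, lieHom_map_sum]; simp_rw [map_smul, permMap_X]
    have hpv : permMap K n π vL = vL := by
      rw [hvL, lieHom_map_sum]; simp_rw [permMap_X]
      exact Equiv.sum_comp π (X K n)
    have hFpu : F K n (permMap K n π uL) = fun m => α (π.symm m) := by
      rw [hpu, lieHom_map_sum]; simp_rw [map_smul, F_X]
      rw [← Equiv.sum_comp π.symm (fun k => α k • (Pi.single (π k) 1 : Fin n → K))]
      simp only [Equiv.apply_symm_apply]
      exact sum_smul_single K n (fun m => α (π.symm m))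
    have heq := key π
    rw [LieHom.map_lie, LieHom.map_lie, LieHom.map_lie, hpv] at heq
    have heq2 := congrArg HH.snd heq
    rw [HH.snd_lie, HH.snd_lie] at heq2
    have heq3 := congrFun (congrFun heq2 i) j
    have efu : HH.fst (phi K n (permMap K n π uL)) = fun m => α (π.symm m) := hFpu
    have efu' : HH.fst (phi K n uL) = α := hFu
    have efv : HH.fst (phi K n vL) = fun _ => (1:K) := hFv
    rw [efu, efu', efv] at heq3
    simp only [mul_one, hπ, Equiv.symm_swap, Equiv.swap_apply_left, Equiv.swap_apply_right]
      at heq3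
    linear_combination -heq3/2
  refine ⟨α ⟨0, by omega⟩, ?_⟩
  rw [Finset.smul_sum]
  exact Finset.sum_congr rfl fun i _ => by rw [hall i ⟨0, by omega⟩]
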